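/- arXiv:1210.7605 — 2 statements merged into one kernel-verified Lean document; each statement's English description precedes it below -/
import Mathlib

section
/- Let S be a subgraph of a graph G and L a list assignment for G. If G is S-critical with respect to L and G = G₁ ∪ G₂ is a union of two subgraphs, then G₁ is ((G₂ ∪ S) ∩ G₁)-critical with respect to (the restriction of) L. -/
open SimpleGraph

/-- An `L`-coloring of the subgraph `H` of `G`: colors from the lists, proper on `H`. -/
def ListColoringOn {V : Type} (G : SimpleGraph V) (L : V → Finset ℕ) (H : G.Subgraph)
    (φ : V → ℕ) : Prop :=
  (∀ v ∈ H.verts, φ v ∈ L v) ∧ ∀ ⦃u w : V⦄, H.Adj u w → φ u ≠ φ w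

/-- The coloring `ψ` of `S` extends to an `L`-coloring of the subgraph `H`. -/
def ExtendsToSub {V : Type} (G : SimpleGraph V) (L : V → Finset ℕ) (S H : G.Subgraph)
    (ψ : V → ℕ) : Prop :=
  ∃ φ : V → ℕ, ListColoringOn G L H φ ∧ ∀ v ∈ S.verts, φ v = ψ v

/-- `Amb` is `S`-critical w.r.t. `L`: every proper subgraph `H` with `S ⊆ H ⊂ Amb` admits an
`L`-coloring of `S` that extends to `H` but not to `Amb`. -/
def IsCriticalRel {V : Type} (G : SimpleGraph V) (L : V → Finset ℕ) (Amb S : G.Subgraph) : Prop :=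
  ∀ H : G.Subgraph, S ≤ H → H < Amb →
    ∃ ψ : V → ℕ, ListColoringOn G L S ψ ∧ ExtendsToSub G L S H ψ ∧ ¬ ExtendsToSub G L S Amb ψ

/-- `G` is `S`-critical with respect to `L`. -/
def IsCriticalSub {V : Type} (G : SimpleGraph V) (L : V → Finset ℕ) (S : G.Subgraph) : Prop :=
  IsCriticalRel G L ⊤ S

/-- The edgeless subgraph on a set `S` of vertices. -/
def vertsSub {V : Type} (G : SimpleGraph V) (S : Set V) : G.Subgraph where
  verts := S
  Adj _ _ := False
  adj_sub h := h.elim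
  edge_vert h := h.elim
  symm := ⟨fun _ _ h => False.elim h⟩

/-- `G` has a proper coloring from the lists `L`. -/
def LColorable {V : Type} (G : SimpleGraph V) (L : V → Finset ℕ) : Prop :=
  ∃ φ : V → ℕ, (∀ v, φ v ∈ L v) ∧ ∀ ⦃u w : V⦄, G.Adj u w → φ u ≠ φ w

/-- Abstract data of a graph embedded in the plane/sphere: the graph, its faces,
the outer face and the vertex–face incidence relation. -/
structure PlaneGraph (V : Type) where
  G : SimpleGraph V
  Face : Type
  outer : Face
  incident : V → Face → Prop

/-- If `G` is `S`-critical w.r.t. `L` and `G = G₁ ∪ G₂`, then `G₁` is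
`((G₂ ∪ S) ∩ G₁)`-critical w.r.t. (the restriction of) `L`. -/
theorem critical_union {V : Type} (G : SimpleGraph V) (L : V → Finset ℕ)
    (S G₁ G₂ : G.Subgraph) (hunion : G₁ ⊔ G₂ = ⊤)
    (hS : S ≤ ⊤) (hcrit : IsCriticalSub G L S) :
    IsCriticalRel G L G₁ ((G₂ ⊔ S) ⊓ G₁) := by
  classical
  intro H hSH hHlt
  -- H ⊔ G₂ is a proper subgraph of ⊤ containing S
  have hG12 : G₁ ⊓ G₂ ≤ H := le_trans (by
    exact le_inf (le_trans inf_le_right le_sup_left) inf_le_left) hSH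
  have hSle : S ≤ H ⊔ G₂ := by
    have : S = (S ⊓ G₁) ⊔ (S ⊓ G₂) := by
      rw [← inf_sup_left, hunion, inf_top_eq]
    rw [this]
    exact sup_le_sup (le_trans (le_inf (le_trans inf_le_left le_sup_right) inf_le_right) hSH)
      inf_le_right
  have hlt : H ⊔ G₂ < ⊤ := by
    refine lt_of_le_of_ne (le_top) ?_
    intro heq
    have : G₁ ≤ H := by
      have h1 : G₁ = (G₁ ⊓ H) ⊔ (G₁ ⊓ G₂) := by
        rw [← inf_sup_left, heq, inf_top_eq]
      rw [h1]
      exact sup_le (inf_le_right) hG12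
    exact absurd (le_antisymm hHlt.le this) (ne_of_lt hHlt)
  obtain ⟨ψ, hψcol, ⟨φ, hφcol, hφψ⟩, hnot⟩ := hcrit (H ⊔ G₂) hSle hlt
  refine ⟨φ, ?_, ?_, ?_⟩
  · -- φ is an L-coloring on (G₂ ⊔ S) ⊓ G₁
    constructor
    · intro v hv
      apply hφcol.1
      rcases hv.1 with h | h
      · exact Or.inr h
      · exact (hSle : S ≤ H ⊔ G₂).1 h
    · intro u w huw
      exact hφcol.2 (Or.inl (hSH.2 huw))
  · -- φ extends itself to H
    refine ⟨φ, ⟨fun v hv => hφcol.1 v (Or.inl hv), fun u w huw => hφcol.2 (Or.inl huw)⟩,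
      fun v _ => rfl⟩
  · -- no extension to G₁
    rintro ⟨σ, hσcol, hσφ⟩
    apply hnot
    refine ⟨fun v => if v ∈ G₁.verts then σ v else φ v, ⟨?_, ?_⟩, ?_⟩
    · intro v _
      by_cases h : v ∈ G₁.verts
      · simpa [h] using hσcol.1 v h
      · have hv2 : v ∈ G₂.verts := by
          have : v ∈ (G₁ ⊔ G₂).verts := by rw [hunion]; trivial
          rcases this with h1 | h1
          · exact absurd h1 h
          · exact h1
        simpa [h] using hφcol.1 v (Or.inr hv2)
    · intro u w huw
      have hadj : G₁.Adj u w ∨ G₂.Adj u w := by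
        have : (G₁ ⊔ G₂).Adj u w := by rw [hunion]; exact huw
        exact this
      have key : ∀ x, x ∈ G₂.verts → x ∈ G₁.verts → σ x = φ x := by
        intro x hx2 hx1
        exact hσφ x ⟨Or.inl hx2, hx1⟩
      rcases hadj with h | h
      · have hu : u ∈ G₁.verts := h.fst_mem
        have hw : w ∈ G₁.verts := h.snd_mem
        simpa [hu, hw] using hσcol.2 h
      · have hu2 : u ∈ G₂.verts := h.fst_mem
        have hw2 : w ∈ G₂.verts := h.snd_mem
        have hφuw : φ u ≠ φ w := hφcol.2 (Or.inr h)
        by_cases hu1 : u ∈ G₁.verts <;> by_cases hw1 : w ∈ G₁.verts <;>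
          simp only [hu1, hw1, if_pos, if_neg, if_true, if_false]
        · rw [key u hu2 hu1, key w hw2 hw1]; exact hφuw
        · rw [key u hu2 hu1]; exact hφuw
        · rw [key w hw2 hw1]; exact hφuw
        · exact hφuw
    · intro v hv
      show (if v ∈ G₁.verts then σ v else φ v) = ψ v
      by_cases h : v ∈ G₁.verts
      · rw [if_pos h, hσφ v ⟨Or.inr hv, h⟩]
        exact hφψ v hv
      · rw [if_neg h]
        exact hφψ v hv
end

section
/- Let G be a graph and S ⊆ V(G) a set of vertices such that S meets every connected component of G. For i ≥ 0 let S_i be the set of vertices at distance exactly i from S, and let n_i = Σ_{j≥i} |S_j|. Then n_i − n_{i+1} = |S_i| for every i, and if n_i ≤ a·|S_i| for a real a ≥ 1 and all i, then n_i ≤ a·|S|·(1 − 1/a)^i for all i. -/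
open SimpleGraph

/-- The distance from a vertex `v` to a set `S` of vertices: the least graph distance to a
reachable vertex of `S`. -/
noncomputable def distToSet {V : Type} (G : SimpleGraph V) (S : Set V) (v : V) : ℕ :=
  sInf {n : ℕ | ∃ s ∈ S, G.Reachable v s ∧ G.dist v s = n}

/-- Layered counting: with `S_i` the vertices at distance exactly `i` from `S`
and `n_i = Σ_{j ≥ i} |S_j|`, we have `n_i − n_{i+1} = |S_i|`; and if `n_i ≤ a |S_i|` for all `i`
with `a ≥ 1`, then `n_i ≤ a |S| (1 − 1/a)^i`. -/
theorem layered_counting {V : Type} [Fintype V] (G : SimpleGraph V) (S : Finset V)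
    (hS : ∀ v : V, ∃ s ∈ S, G.Reachable v s) :
    (∀ i : ℕ,
      {v : V | i ≤ distToSet G ↑S v}.ncard - {v : V | i + 1 ≤ distToSet G ↑S v}.ncard =
        {v : V | distToSet G ↑S v = i}.ncard) ∧
    (∀ a : ℝ, 1 ≤ a →
      (∀ i : ℕ, ({v : V | i ≤ distToSet G ↑S v}.ncard : ℝ) ≤
        a * {v : V | distToSet G ↑S v = i}.ncard) →
      ∀ i : ℕ, ({v : V | i ≤ distToSet G ↑S v}.ncard : ℝ) ≤
        a * S.card * (1 - 1 / a) ^ i) := by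
  haveI := Classical.decEq V
  set f : V → ℕ := distToSet G ↑S with hf
  -- key splitting: A i = B i ∪ A (i+1)
  have hsplit : ∀ i : ℕ, {v : V | i ≤ f v}.ncard =
      {v : V | f v = i}.ncard + {v : V | i + 1 ≤ f v}.ncard := by
    intro i
    have hunion : {v : V | i ≤ f v} = {v : V | f v = i} ∪ {v : V | i + 1 ≤ f v} := by
      ext v
      simp only [Set.mem_setOf_eq, Set.mem_union]
      omega
    have hdisj : Disjoint {v : V | f v = i} {v : V | i + 1 ≤ f v} := by
      rw [Set.disjoint_left]
      intro v hv hv'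
      simp only [Set.mem_setOf_eq] at hv hv'
      omega
    rw [hunion, Set.ncard_union_eq hdisj (Set.toFinite _) (Set.toFinite _)]
  have part1 : ∀ i : ℕ,
      {v : V | i ≤ f v}.ncard - {v : V | i + 1 ≤ f v}.ncard = {v : V | f v = i}.ncard := by
    intro i
    rw [hsplit i]
    omega
  refine ⟨part1, ?_⟩
  intro a ha hbound
  have ha0 : (0 : ℝ) < a := lt_of_lt_of_le one_pos ha
  -- B 0 = S
  have hB0 : {v : V | f v = 0} = ↑S := by
    ext v
    simp only [Set.mem_setOf_eq, hf, distToSet]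
    constructor
    · intro h0
      have hne : {n : ℕ | ∃ s ∈ (↑S : Set V), G.Reachable v s ∧ G.dist v s = n}.Nonempty := by
        obtain ⟨s, hs, hr⟩ := hS v
        exact ⟨G.dist v s, s, hs, hr, rfl⟩
      have := Nat.sInf_mem hne
      rw [h0] at this
      obtain ⟨s, hs, hr, hd⟩ := this
      rwa [hr.dist_eq_zero_iff.mp hd]
    · intro hv
      have : 0 ∈ {n : ℕ | ∃ s ∈ (↑S : Set V), G.Reachable v s ∧ G.dist v s = n} :=
        ⟨v, hv, Reachable.refl v, SimpleGraph.dist_self⟩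
      exact Nat.le_zero.mp (Nat.sInf_le this)
  intro i
  induction i with
  | zero =>
    simpa [hB0, Set.ncard_coe_finset] using hbound 0
  | succ i ih =>
    have hstep : ({v : V | i + 1 ≤ f v}.ncard : ℝ) =
        ({v : V | i ≤ f v}.ncard : ℝ) - ({v : V | f v = i}.ncard : ℝ) := by
      have := hsplit i
      push_cast [this]
      ring
    have hb : ({v : V | i ≤ f v}.ncard : ℝ) / a ≤ ({v : V | f v = i}.ncard : ℝ) :=
      (div_le_iff₀ ha0).mpr (by linarith [hbound i, mul_comm a ({v : V | f v = i}.ncard : ℝ)])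
    have h1a : (0 : ℝ) ≤ 1 - 1 / a := by
      have : 1 / a ≤ 1 := by
        rw [div_le_one ha0]; exact ha
      linarith
    have : ({v : V | i + 1 ≤ f v}.ncard : ℝ) ≤ ({v : V | i ≤ f v}.ncard : ℝ) * (1 - 1 / a) := by
      rw [hstep]
      have : ({v : V | i ≤ f v}.ncard : ℝ) * (1 - 1 / a)
          = ({v : V | i ≤ f v}.ncard : ℝ) - ({v : V | i ≤ f v}.ncard : ℝ) / a := by
        field_simp
      rw [this]
      linarith
    calc ({v : V | i + 1 ≤ f v}.ncard : ℝ)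
        ≤ ({v : V | i ≤ f v}.ncard : ℝ) * (1 - 1 / a) := this
      _ ≤ (a * S.card * (1 - 1 / a) ^ i) * (1 - 1 / a) := by
          exact mul_le_mul_of_nonneg_right ih h1a
      _ = a * S.card * (1 - 1 / a) ^ (i + 1) := by ring
end
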